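/- arXiv:1502.04881 — 2 statements merged into one kernel-verified Lean document; each statement's English description precedes it below -/
import Mathlib

section
/- Let V be a real vector space, F an affine subspace, L₀ ⊂ F convex, and define the absolute robustness w(x) = sup_{y ∈ L₀} w(x|y), where w(x|y) = sup{t ∈ [0,1] : t•x + (1-t)•y ∈ L₀}. Then x ↦ 1/w(x) is convex: for x₁, x₂ ∈ F and t ∈ [0,1], 1/w(t•x₁+(1-t)•x₂) ≤ t/w(x₁) + (1-t)/w(x₂). -/
open scoped ENNReal

/-- Relative robustness: `w(x|y) = sup {t ∈ [0,1] | t•x + (1-t)•y ∈ L₀}`, with `sSup ∅ = 0`. -/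
noncomputable def relRob {V : Type*} [AddCommGroup V] [Module ℝ V]
    (L₀ : Set V) (x y : V) : ℝ :=
  sSup {t : ℝ | t ∈ Set.Icc (0 : ℝ) 1 ∧ t • x + (1 - t) • y ∈ L₀}

/-- Absolute robustness: `w(x) = sup_{y ∈ L₀} w(x|y)`. -/
noncomputable def absRob {V : Type*} [AddCommGroup V] [Module ℝ V]
    (L₀ : Set V) (x : V) : ℝ :=
  sSup ((fun y => relRob L₀ x y) '' L₀)

section Aux

variable {V : Type*} [AddCommGroup V] [Module ℝ V] {L₀ : Set V}

lemma relRob_bddAbove (L₀ : Set V) (x y : V) :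
    BddAbove {t : ℝ | t ∈ Set.Icc (0 : ℝ) 1 ∧ t • x + (1 - t) • y ∈ L₀} :=
  ⟨1, fun _ ha => ha.1.2⟩

lemma relRob_le_one (L₀ : Set V) (x y : V) : relRob L₀ x y ≤ 1 :=
  Real.sSup_le (fun _ ha => ha.1.2) zero_le_one

lemma absRob_bddAbove (L₀ : Set V) (x : V) :
    BddAbove ((fun y => relRob L₀ x y) '' L₀) := by
  refine ⟨1, ?_⟩
  rintro a ⟨y, _, rfl⟩
  exact relRob_le_one L₀ x y

/-- If `s < relRob L₀ x y` with `0 ≤ s` and `y ∈ L₀`, then `s•x+(1-s)•y ∈ L₀`. -/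
lemma mem_of_lt_relRob (hL₀ : Convex ℝ L₀) {x y : V} (hy : y ∈ L₀) {s : ℝ}
    (hs : 0 ≤ s) (h : s < relRob L₀ x y) :
    s • x + (1 - s) • y ∈ L₀ := by
  have hne : {t : ℝ | t ∈ Set.Icc (0 : ℝ) 1 ∧ t • x + (1 - t) • y ∈ L₀}.Nonempty := by
    by_contra hemp
    rw [Set.not_nonempty_iff_eq_empty] at hemp
    rw [relRob, hemp, Real.sSup_empty] at h
    linarith
  obtain ⟨t₁, ht₁, hst₁⟩ := exists_lt_of_lt_csSup hne h
  obtain ⟨⟨ht₁0, ht₁1⟩, hmem⟩ := ht₁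
  have ht₁pos : 0 < t₁ := lt_of_le_of_lt hs hst₁
  have key : s • x + (1 - s) • y
      = (s / t₁) • (t₁ • x + (1 - t₁) • y) + (1 - s / t₁) • y := by
    match_scalars
    · field_simp
    · field_simp; ring
  rw [key]
  exact hL₀ hmem hy (div_nonneg hs ht₁pos.le)
    (by have : s / t₁ ≤ 1 := (div_le_one ht₁pos).2 hst₁.le; linarith)
    (by ring)

/-- If `0 < s < absRob L₀ x`, then there is `y ∈ L₀` with `s•x+(1-s)•y ∈ L₀` and `s < 1`. -/
lemma exists_of_lt_absRob (hL₀ : Convex ℝ L₀) {x : V} {s : ℝ}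
    (hs : 0 < s) (h : s < absRob L₀ x) :
    ∃ y ∈ L₀, s • x + (1 - s) • y ∈ L₀ ∧ s < 1 := by
  have hne : ((fun y => relRob L₀ x y) '' L₀).Nonempty := by
    by_contra hemp
    rw [Set.not_nonempty_iff_eq_empty] at hemp
    rw [absRob, hemp, Real.sSup_empty] at h
    linarith
  obtain ⟨a, ⟨y, hy, rfl⟩, hsa⟩ := exists_lt_of_lt_csSup hne h
  exact ⟨y, hy, mem_of_lt_relRob hL₀ hy hs.le hsa,
    lt_of_lt_of_le hsa (relRob_le_one L₀ x y)⟩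

/-- Key combination lemma. -/
lemma key_combo (hL₀ : Convex ℝ L₀) {x₁ x₂ y₁ y₂ : V} {s₁ s₂ t : ℝ}
    (hy₁ : y₁ ∈ L₀) (hy₂ : y₂ ∈ L₀)
    (hz₁ : s₁ • x₁ + (1 - s₁) • y₁ ∈ L₀) (hz₂ : s₂ • x₂ + (1 - s₂) • y₂ ∈ L₀)
    (hs₁0 : 0 < s₁) (hs₁1 : s₁ < 1) (hs₂0 : 0 < s₂) (hs₂1 : s₂ < 1)
    (ht0 : 0 < t) (ht1 : t < 1) :
    s₁ * s₂ / (t * s₂ + (1 - t) * s₁) ≤ absRob L₀ (t • x₁ + (1 - t) • x₂) := by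
  set D : ℝ := t * s₂ + (1 - t) * s₁ with hD
  have hDpos : 0 < D :=
    add_pos (mul_pos ht0 hs₂0) (mul_pos (by linarith) hs₁0)
  set l : ℝ := t * s₂ / D with hl
  set s : ℝ := s₁ * s₂ / D with hs
  have hl0 : 0 ≤ l := div_nonneg (mul_nonneg ht0.le hs₂0.le) hDpos.le
  have hl1 : l ≤ 1 := by
    rw [hl, div_le_one hDpos, hD]
    nlinarith [mul_pos (by linarith : (0:ℝ) < 1 - t) hs₁0]
  have hspos : 0 < s := div_pos (mul_pos hs₁0 hs₂0) hDpos
  have hs1 : s < 1 := by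
    rw [hs, div_lt_one hDpos, hD]
    nlinarith [mul_pos (mul_pos ht0 hs₂0) (by linarith : (0:ℝ) < 1 - s₁),
      mul_pos (mul_pos (by linarith : (0:ℝ) < 1 - t) hs₁0)
        (by linarith : (0:ℝ) < 1 - s₂)]
  have h1s : 0 < 1 - s := by linarith
  set c₁ : ℝ := l * (1 - s₁) / (1 - s) with hc₁
  set c₂ : ℝ := (1 - l) * (1 - s₂) / (1 - s) with hc₂
  have hc₁0 : 0 ≤ c₁ :=
    div_nonneg (mul_nonneg hl0 (by linarith)) h1s.le
  have hc₂0 : 0 ≤ c₂ :=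
    div_nonneg (mul_nonneg (by linarith) (by linarith)) h1s.le
  have hsum : c₁ + c₂ = 1 := by
    rw [hc₁, hc₂, ← add_div, div_eq_one_iff_eq h1s.ne']
    rw [hl, hs]
    field_simp
    ring
  set y : V := c₁ • y₁ + c₂ • y₂ with hy
  have hyL : y ∈ L₀ := hL₀ hy₁ hy₂ hc₁0 hc₂0 hsum
  have hzL : l • (s₁ • x₁ + (1 - s₁) • y₁) + (1 - l) • (s₂ • x₂ + (1 - s₂) • y₂) ∈ L₀ :=
    hL₀ hz₁ hz₂ hl0 (by linarith) (by ring)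
  have hzeq : s • (t • x₁ + (1 - t) • x₂) + (1 - s) • y
      = l • (s₁ • x₁ + (1 - s₁) • y₁) + (1 - l) • (s₂ • x₂ + (1 - s₂) • y₂) := by
    rw [hy]
    match_scalars
    · rw [hs, hl]; field_simp
    · rw [hs, hl]; field_simp; ring
    · rw [hc₁]; field_simp
    · rw [hc₂]; field_simp
  have hmem : s • (t • x₁ + (1 - t) • x₂) + (1 - s) • y ∈ L₀ := hzeq ▸ hzL
  have h1 : s ≤ relRob L₀ (t • x₁ + (1 - t) • x₂) y :=
    le_csSup (relRob_bddAbove L₀ _ _) ⟨⟨hspos.le, hs1.le⟩, hmem⟩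
  have h2 : relRob L₀ (t • x₁ + (1 - t) • x₂) y ≤ absRob L₀ (t • x₁ + (1 - t) • x₂) :=
    le_csSup (absRob_bddAbove L₀ _) ⟨y, hyL, rfl⟩
  exact le_trans h1 h2

end Aux

theorem stmt2 {V : Type*} [AddCommGroup V] [Module ℝ V]
    (F : AffineSubspace ℝ V) (L₀ : Set V)
    (hL₀F : L₀ ⊆ (F : Set V)) (hL₀ : Convex ℝ L₀)
    (x₁ x₂ : V) (hx₁ : x₁ ∈ F) (hx₂ : x₂ ∈ F)
    (t : ℝ) (ht : t ∈ Set.Icc (0 : ℝ) 1) :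
    1 / ENNReal.ofReal (absRob L₀ (t • x₁ + (1 - t) • x₂)) ≤
      ENNReal.ofReal t / ENNReal.ofReal (absRob L₀ x₁) +
      ENNReal.ofReal (1 - t) / ENNReal.ofReal (absRob L₀ x₂) := by
  obtain ⟨ht0, ht1⟩ := ht
  -- dispose of t = 0 and t = 1
  rcases eq_or_lt_of_le ht0 with h0 | ht0
  · subst h0
    simp
  rcases eq_or_lt_of_le ht1 with h1 | ht1
  · subst h1
    simp
  -- dispose of vanishing denominators
  by_cases hw₁0 : ENNReal.ofReal (absRob L₀ x₁) = 0
  · rw [hw₁0, ENNReal.div_zero (by simpa using ht0)]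
    simp
  by_cases hw₂0 : ENNReal.ofReal (absRob L₀ x₂) = 0
  · rw [hw₂0, ENNReal.div_zero (by simpa using (by linarith : (0:ℝ) < 1 - t))]
    simp
  have hw₁ : 0 < absRob L₀ x₁ := by
    by_contra h
    exact hw₁0 (ENNReal.ofReal_eq_zero.2 (le_of_not_gt h))
  have hw₂ : 0 < absRob L₀ x₂ := by
    by_contra h
    exact hw₂0 (ENNReal.ofReal_eq_zero.2 (le_of_not_gt h))
  set w : ℝ := absRob L₀ (t • x₁ + (1 - t) • x₂) with hwdef
  -- main real inequality for approximants
  have main : ∀ s₁ ∈ Set.Ioo (0:ℝ) (absRob L₀ x₁), ∀ s₂ ∈ Set.Ioo (0:ℝ) (absRob L₀ x₂),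
      s₁ * s₂ / (t * s₂ + (1 - t) * s₁) ≤ w := by
    rintro s₁ ⟨hs₁0, hs₁⟩ s₂ ⟨hs₂0, hs₂⟩
    obtain ⟨y₁, hy₁, hz₁, hs₁1⟩ := exists_of_lt_absRob hL₀ hs₁0 hs₁
    obtain ⟨y₂, hy₂, hz₂, hs₂1⟩ := exists_of_lt_absRob hL₀ hs₂0 hs₂
    exact key_combo hL₀ hy₁ hy₂ hz₁ hz₂ hs₁0 hs₁1 hs₂0 hs₂1 ht0 ht1
  have hwpos : 0 < w := by
    have := main (absRob L₀ x₁ / 2) ⟨by linarith, by linarith⟩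
      (absRob L₀ x₂ / 2) ⟨by linarith, by linarith⟩
    have hpos : 0 < absRob L₀ x₁ / 2 * (absRob L₀ x₂ / 2) /
        (t * (absRob L₀ x₂ / 2) + (1 - t) * (absRob L₀ x₁ / 2)) :=
      div_pos (mul_pos (by linarith) (by linarith))
        (add_pos (mul_pos ht0 (by linarith)) (mul_pos (by linarith) (by linarith)))
    linarith
  -- inverted form
  have main' : ∀ s₁ ∈ Set.Ioo (0:ℝ) (absRob L₀ x₁), ∀ s₂ ∈ Set.Ioo (0:ℝ) (absRob L₀ x₂),
      1 / w ≤ t / s₁ + (1 - t) / s₂ := by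
    rintro s₁ hs₁ s₂ hs₂
    have hs₁0 : 0 < s₁ := hs₁.1
    have hs₂0 : 0 < s₂ := hs₂.1
    have hDpos : 0 < t * s₂ + (1 - t) * s₁ :=
      add_pos (mul_pos ht0 hs₂0) (mul_pos (by linarith) hs₁0)
    have hgpos : 0 < s₁ * s₂ / (t * s₂ + (1 - t) * s₁) :=
      div_pos (mul_pos hs₁0 hs₂0) hDpos
    have h := main s₁ hs₁ s₂ hs₂
    calc 1 / w ≤ 1 / (s₁ * s₂ / (t * s₂ + (1 - t) * s₁)) :=
          one_div_le_one_div_of_le hgpos h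
      _ = t / s₁ + (1 - t) / s₂ := by field_simp
  -- take limits
  have step1 : ∀ s₂ ∈ Set.Ioo (0:ℝ) (absRob L₀ x₂),
      1 / w ≤ t / absRob L₀ x₁ + (1 - t) / s₂ := by
    rintro s₂ hs₂
    have hcont : Filter.Tendsto (fun s₁ : ℝ => t / s₁ + (1 - t) / s₂)
        (nhdsWithin (absRob L₀ x₁) (Set.Iio (absRob L₀ x₁)))
        (nhds (t / absRob L₀ x₁ + (1 - t) / s₂)) :=
      (((continuousAt_const.div continuousAt_id hw₁.ne').add
        continuousAt_const).continuousWithinAt : ContinuousWithinAt _ _ _)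
    refine ge_of_tendsto hcont ?_
    filter_upwards [Ioo_mem_nhdsLT_of_mem (Set.mem_Ioc.2 ⟨hw₁, le_refl _⟩)] with s₁ hs₁
    exact main' s₁ hs₁ s₂ hs₂
  have step2 : 1 / w ≤ t / absRob L₀ x₁ + (1 - t) / absRob L₀ x₂ := by
    have hcont : Filter.Tendsto (fun s₂ : ℝ => t / absRob L₀ x₁ + (1 - t) / s₂)
        (nhdsWithin (absRob L₀ x₂) (Set.Iio (absRob L₀ x₂)))
        (nhds (t / absRob L₀ x₁ + (1 - t) / absRob L₀ x₂)) :=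
      ((continuousAt_const.add
        (continuousAt_const.div continuousAt_id hw₂.ne')).continuousWithinAt :
          ContinuousWithinAt _ _ _)
    refine ge_of_tendsto hcont ?_
    filter_upwards [Ioo_mem_nhdsLT_of_mem (Set.mem_Ioc.2 ⟨hw₂, le_refl _⟩)] with s₂ hs₂
    exact step1 s₂ hs₂
  -- convert to ENNReal
  calc 1 / ENNReal.ofReal w = ENNReal.ofReal (1 / w) := by
        rw [ENNReal.ofReal_div_of_pos hwpos, ENNReal.ofReal_one]
    _ ≤ ENNReal.ofReal (t / absRob L₀ x₁ + (1 - t) / absRob L₀ x₂) :=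
        ENNReal.ofReal_le_ofReal step2
    _ = ENNReal.ofReal t / ENNReal.ofReal (absRob L₀ x₁) +
        ENNReal.ofReal (1 - t) / ENNReal.ofReal (absRob L₀ x₂) := by
        rw [ENNReal.ofReal_add (div_nonneg ht0.le hw₁.le)
          (div_nonneg (by linarith) hw₂.le),
          ENNReal.ofReal_div_of_pos hw₁, ENNReal.ofReal_div_of_pos hw₂]
end

section
/- Let ℋ be a d-dimensional Hilbert space, id the identity channel on states of ℋ, and 𝒯 the completely depolarizing channel 𝒯(ρ) = 𝟙/d. Then for λ ∈ [0,1], the channel λ•𝒯 + (1-λ)•id is compatible with itself (i.e., there exists a channel S(ℋ) → S(ℋ⊗ℋ) with both partial-trace marginals equal to it) if and only if d/(2(d+1)) ≤ λ ≤ d²/(d²-1) ∩ [0,1], i.e., λ ≥ d/(2(d+1)). -/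
open scoped ComplexOrder

open Matrix in
/-- The Choi matrix of a linear map between matrix algebras. -/
noncomputable def choi {n m : Type*} [Fintype n] [DecidableEq n] [Fintype m]
    (Φ : Matrix n n ℂ →ₗ[ℂ] Matrix m m ℂ) : Matrix (n × m) (n × m) ℂ :=
  Matrix.of fun p q => Φ (Matrix.single p.1 q.1 1) p.2 q.2

/-- Complete positivity of a linear map between matrix algebras
(positivity of its Choi matrix). -/
def IsCP {n m : Type*} [Fintype n] [DecidableEq n] [Fintype m]
    (Φ : Matrix n n ℂ →ₗ[ℂ] Matrix m m ℂ) : Prop :=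
  (choi Φ).PosSemidef

/-- Trace preservation. -/
def IsTP {n m : Type*} [Fintype n] [Fintype m]
    (Φ : Matrix n n ℂ →ₗ[ℂ] Matrix m m ℂ) : Prop :=
  ∀ ρ, (Φ ρ).trace = ρ.trace

/-- A quantum channel: a completely positive trace-preserving linear map. -/
def IsChannel {n m : Type*} [Fintype n] [DecidableEq n] [Fintype m]
    (Φ : Matrix n n ℂ →ₗ[ℂ] Matrix m m ℂ) : Prop :=
  IsCP Φ ∧ IsTP Φ

/-- A (finite-outcome) POVM: positive operators summing to the identity. -/
def IsPOVM {n Ω : Type*} [Fintype n] [DecidableEq n] [Fintype Ω]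
    (M : Ω → Matrix n n ℂ) : Prop :=
  (∀ x, (M x).PosSemidef) ∧ ∑ x, M x = 1

/-- Joint measurability of two POVMs: existence of a joint POVM with the
given marginals. -/
def JointlyMeasurable {n Ω Ω' : Type*} [Fintype n] [DecidableEq n]
    [Fintype Ω] [Fintype Ω']
    (A : Ω → Matrix n n ℂ) (B : Ω' → Matrix n n ℂ) : Prop :=
  ∃ G : Ω × Ω' → Matrix n n ℂ, IsPOVM G ∧
    (∀ x, ∑ y, G (x, y) = A x) ∧ (∀ y, ∑ x, G (x, y) = B y)

/-- Partial trace over the second tensor factor. -/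
noncomputable def ptrace2 {a b : Type*} [Fintype b]
    (ρ : Matrix (a × b) (a × b) ℂ) : Matrix a a ℂ :=
  Matrix.of fun i j => ∑ k, ρ (i, k) (j, k)

/-- Partial trace over the first tensor factor. -/
noncomputable def ptrace1 {a b : Type*} [Fintype a]
    (ρ : Matrix (a × b) (a × b) ℂ) : Matrix b b ℂ :=
  Matrix.of fun i j => ∑ k, ρ (k, i) (k, j)

/-- A channel is self-compatible if it arises as both marginals of a single
channel into the doubled system. -/
def SelfCompatible {h : Type*} [Fintype h] [DecidableEq h]
    (E : Matrix h h ℂ →ₗ[ℂ] Matrix h h ℂ) : Prop :=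
  ∃ F : Matrix h h ℂ →ₗ[ℂ] Matrix (h × h) (h × h) ℂ, IsChannel F ∧
    (∀ ρ, ptrace2 (F ρ) = E ρ) ∧ (∀ ρ, ptrace1 (F ρ) = E ρ)

/-- The completely depolarizing channel `ρ ↦ tr(ρ)·𝟙/d`. -/
noncomputable def depol (d : ℕ) : Matrix (Fin d) (Fin d) ℂ →ₗ[ℂ] Matrix (Fin d) (Fin d) ℂ where
  toFun ρ := (ρ.trace / d) • 1
  map_add' ρ τ := by simp [Matrix.trace_add, add_div, add_smul]
  map_smul' c ρ := by simp [Matrix.trace_smul, smul_smul, mul_div_assoc]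


open scoped ComplexOrder

noncomputable def Fmap (d : ℕ) (c₁ c₂ : ℝ) :
    Matrix (Fin d) (Fin d) ℂ →ₗ[ℂ] Matrix (Fin d × Fin d) (Fin d × Fin d) ℂ where
  toFun ρ := Matrix.of fun p q =>
    (c₁ : ℂ) * (ρ p.1 q.1 * (if p.2 = q.2 then 1 else 0)
      + ρ p.2 q.1 * (if p.1 = q.2 then 1 else 0)
      + ρ p.1 q.2 * (if p.2 = q.1 then 1 else 0)
      + ρ p.2 q.2 * (if p.1 = q.1 then 1 else 0))
    + (c₂ : ℂ) * ρ.trace * (if p = q then 1 else 0)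
  map_add' ρ τ := by
    funext p q
    simp only [Matrix.add_apply, Matrix.trace_add, Matrix.of_apply]
    ring
  map_smul' c ρ := by
    funext p q
    simp only [Matrix.smul_apply, Matrix.trace_smul, Matrix.of_apply, RingHom.id_apply,
      smul_eq_mul]
    ring

lemma Fmap_apply (d : ℕ) (c₁ c₂ : ℝ) (ρ : Matrix (Fin d) (Fin d) ℂ) (p q : Fin d × Fin d) :
    Fmap d c₁ c₂ ρ p q =
    (c₁ : ℂ) * (ρ p.1 q.1 * (if p.2 = q.2 then 1 else 0)
      + ρ p.2 q.1 * (if p.1 = q.2 then 1 else 0)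
      + ρ p.1 q.2 * (if p.2 = q.1 then 1 else 0)
      + ρ p.2 q.2 * (if p.1 = q.1 then 1 else 0))
    + (c₂ : ℂ) * ρ.trace * (if p = q then 1 else 0) := rfl

lemma ptrace2_Fmap (d : ℕ) (c₁ c₂ : ℝ) (ρ : Matrix (Fin d) (Fin d) ℂ) :
    ptrace2 (Fmap d c₁ c₂ ρ) = Matrix.of fun a c =>
      ((c₁ : ℂ) * ((d : ℂ) + 2)) * ρ a c
        + ((c₁ : ℂ) + (c₂ : ℂ) * d) * ρ.trace * (if a = c then 1 else 0) := by
  funext a c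
  simp only [ptrace2, Matrix.of_apply, Fmap_apply, Prod.mk.injEq]
  rw [Finset.sum_add_distrib]
  simp [Finset.sum_ite_eq, Finset.sum_ite_eq', Finset.mul_sum, Matrix.trace,
    Matrix.diag, mul_add, Finset.sum_add_distrib, ite_and]
  split_ifs <;> simp [add_mul, Finset.sum_add_distrib, mul_assoc, ← Finset.mul_sum] <;> ring

lemma ptrace1_Fmap (d : ℕ) (c₁ c₂ : ℝ) (ρ : Matrix (Fin d) (Fin d) ℂ) :
    ptrace1 (Fmap d c₁ c₂ ρ) = Matrix.of fun b e =>
      ((c₁ : ℂ) * ((d : ℂ) + 2)) * ρ b e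
        + ((c₁ : ℂ) + (c₂ : ℂ) * d) * ρ.trace * (if b = e then 1 else 0) := by
  funext b e
  simp only [ptrace1, Matrix.of_apply, Fmap_apply, Prod.mk.injEq]
  rw [Finset.sum_add_distrib]
  simp [Finset.sum_ite_eq, Finset.sum_ite_eq', Finset.mul_sum, Matrix.trace,
    Matrix.diag, mul_add, Finset.sum_add_distrib, ite_and]
  split_ifs <;> simp [add_mul, Finset.sum_add_distrib, mul_assoc, ← Finset.mul_sum] <;> ring

lemma tp_Fmap (d : ℕ) (c₁ c₂ : ℝ) (ρ : Matrix (Fin d) (Fin d) ℂ) :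
    (Fmap d c₁ c₂ ρ).trace = ((c₁:ℂ) * (2*d+2) + (c₂:ℂ)*d^2) * ρ.trace := by
  simp only [Matrix.trace, Matrix.diag, Fmap_apply, Fintype.sum_prod_type]
  simp [Finset.sum_ite_eq, Finset.mul_sum, mul_add, Finset.sum_add_distrib, Finset.sum_comm (γ := Fin d)]
  simp [add_mul, Finset.sum_add_distrib, mul_assoc, ← Finset.mul_sum]
  ring

noncomputable def cloneB (d : ℕ) : Matrix (Fin d) (Fin d × (Fin d × Fin d)) ℂ :=
  Matrix.of fun n m =>
    (if m.2.2 = n then (if m.2.1 = m.1 then 1 else 0) else 0)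
      + (if m.2.1 = n then (if m.2.2 = m.1 then 1 else 0) else 0)

open Matrix

set_option maxHeartbeats 1600000 in
lemma cloneB_sum (d : ℕ) (p a b q c e : Fin d) :
    ∑ n, star (cloneB d n (p, (a, b))) * cloneB d n (q, (c, e)) =
      (if p = a ∧ q = c then 1 else 0) * (if b = e then (1:ℂ) else 0)
      + (if p = b ∧ q = c then 1 else 0) * (if a = e then 1 else 0)
      + (if p = a ∧ q = e then 1 else 0) * (if b = c then 1 else 0)
      + (if p = b ∧ q = e then 1 else 0) * (if a = c then 1 else 0) := by
  have hstar : ∀ n, star (cloneB d n (p, (a, b))) = cloneB d n (p, (a, b)) := by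
    intro n; simp only [cloneB, Matrix.of_apply]; split_ifs <;> simp
  simp only [hstar]
  simp only [cloneB, Matrix.of_apply,
    add_mul, mul_add, Finset.sum_add_distrib, ite_mul, mul_ite, mul_zero, zero_mul,
    mul_one, one_mul, Finset.sum_ite_eq, Finset.mem_univ, if_true]
  simp only [ite_and]
  split_ifs <;> (try norm_num) <;> grind


set_option maxHeartbeats 1600000 in
lemma choi_Fmap (d : ℕ) (c₁ c₂ : ℝ) :
    choi (Fmap d c₁ c₂) = (c₁ : ℂ) • ((cloneB d)ᴴ * cloneB d) + (c₂ : ℂ) • 1 := by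
  ext ⟨p, a, b⟩ ⟨q, c, e⟩
  have h := cloneB_sum d p a b q c e
  simp only [Matrix.add_apply, Matrix.smul_apply, Matrix.mul_apply, Matrix.conjTranspose_apply] at h ⊢
  simp only [choi, Matrix.of_apply, Fmap_apply, Matrix.add_apply, Matrix.smul_apply,
    Matrix.one_apply, Matrix.single, Matrix.trace, Matrix.diag, smul_eq_mul,
    Prod.mk.injEq, h]
  have htr : ∑ i : Fin d, (if p = i ∧ q = i then (1:ℂ) else 0) = if p = q then 1 else 0 := by
    simp only [ite_and, Finset.sum_ite_eq, Finset.mem_univ, if_true]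
    split_ifs <;> (try grind) <;> norm_num <;> grind
  rw [htr]
  have hδ : (if p = q then (1:ℂ) else 0) * (if a = c ∧ b = e then 1 else 0)
      = if p = q ∧ a = c ∧ b = e then 1 else 0 := by
    split_ifs <;> simp_all
  rw [mul_assoc, hδ]

-- real inequality core
lemma real_core (D : ℝ) (hD : 2 ≤ D) (a b t Sa Sb : ℝ)
    (ha0 : 0 ≤ a) (hb0 : 0 ≤ b) (ht0 : 0 ≤ t) (hSa0 : 0 ≤ Sa) (hSb0 : 0 ≤ Sb)
    (ha : a ^ 2 ≤ (D - 1) * Sa) (hb : b ^ 2 ≤ (D - 1) * Sb) :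
    (a + t) ^ 2 + (b + t) ^ 2 ≤ (D + 1) * (Sa + Sb + t ^ 2) := by
  nlinarith [sq_nonneg (2*a - (D-1)*t), sq_nonneg (2*b - (D-1)*t), sq_nonneg (a - b),
    mul_nonneg (sub_nonneg.2 hD) hSa0, mul_nonneg (sub_nonneg.2 hD) hSb0,
    mul_nonneg ht0 ht0]

lemma perk (d : ℕ) (hd : 2 ≤ d) (k : Fin d) (z w : Fin d → ℂ) (hzw : z k = w k) :
    ‖∑ i, z i‖ ^ 2 + ‖∑ i, w i‖ ^ 2 ≤
      ((d : ℝ) + 1) * (∑ i, ‖z i‖ ^ 2 + ∑ i ∈ Finset.univ.erase k, ‖w i‖ ^ 2) := by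
  classical
  set T := Finset.univ.erase k with hT
  have hcard : (T.card : ℝ) = (d : ℝ) - 1 := by
    rw [hT, Finset.card_erase_of_mem (Finset.mem_univ k)]
    simp only [Finset.card_univ, Fintype.card_fin]
    have : 1 ≤ d := le_trans (by norm_num) hd
    push_cast [Nat.cast_sub this]
    ring
  have hz : ∑ i ∈ T, z i + z k = ∑ i, z i := Finset.sum_erase_add _ _ (Finset.mem_univ k)
  have hw : ∑ i ∈ T, w i + w k = ∑ i, w i := Finset.sum_erase_add _ _ (Finset.mem_univ k)
  set a := ‖∑ i ∈ T, z i‖ with ha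
  set b := ‖∑ i ∈ T, w i‖ with hb
  set t := ‖z k‖ with ht
  set Sa := ∑ i ∈ T, ‖z i‖ ^ 2 with hSa
  set Sb := ∑ i ∈ T, ‖w i‖ ^ 2 with hSb
  have hzn : ‖∑ i, z i‖ ≤ a + t := by rw [← hz]; exact norm_add_le _ _
  have hwn : ‖∑ i, w i‖ ≤ b + t := by rw [← hw, ← hzw]; exact norm_add_le _ _
  have hz2 : ‖∑ i, z i‖ ^ 2 ≤ (a + t) ^ 2 :=
    pow_le_pow_left₀ (norm_nonneg _) hzn 2
  have hw2 : ‖∑ i, w i‖ ^ 2 ≤ (b + t) ^ 2 :=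
    pow_le_pow_left₀ (norm_nonneg _) hwn 2
  have hCSa : a ^ 2 ≤ ((d : ℝ) - 1) * Sa := by
    have h1 : a ≤ ∑ i ∈ T, ‖z i‖ := norm_sum_le _ _
    have h2 : a ^ 2 ≤ (∑ i ∈ T, ‖z i‖) ^ 2 := pow_le_pow_left₀ (norm_nonneg _) h1 2
    have h3 : (∑ i ∈ T, ‖z i‖) ^ 2 ≤ (T.card : ℝ) * ∑ i ∈ T, ‖z i‖ ^ 2 :=
      sq_sum_le_card_mul_sum_sq
    rw [hcard] at h3
    exact le_trans h2 h3
  have hCSb : b ^ 2 ≤ ((d : ℝ) - 1) * Sb := by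
    have h1 : b ≤ ∑ i ∈ T, ‖w i‖ := norm_sum_le _ _
    have h2 : b ^ 2 ≤ (∑ i ∈ T, ‖w i‖) ^ 2 := pow_le_pow_left₀ (norm_nonneg _) h1 2
    have h3 : (∑ i ∈ T, ‖w i‖) ^ 2 ≤ (T.card : ℝ) * ∑ i ∈ T, ‖w i‖ ^ 2 :=
      sq_sum_le_card_mul_sum_sq
    rw [hcard] at h3
    exact le_trans h2 h3
  have hcore := real_core (d : ℝ) (by exact_mod_cast hd) a b t Sa Sb (norm_nonneg _)
    (norm_nonneg _) (norm_nonneg _)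
    (Finset.sum_nonneg fun i _ => sq_nonneg _) (Finset.sum_nonneg fun i _ => sq_nonneg _)
    hCSa hCSb
  have hsum : ∑ i, ‖z i‖ ^ 2 = Sa + t ^ 2 := by
    rw [hSa, ht, ← Finset.sum_erase_add _ _ (Finset.mem_univ k)]
  rw [hsum]
  calc ‖∑ i, z i‖ ^ 2 + ‖∑ i, w i‖ ^ 2 ≤ (a + t) ^ 2 + (b + t) ^ 2 := add_le_add hz2 hw2
    _ ≤ ((d : ℝ) + 1) * (Sa + Sb + t ^ 2) := hcore
    _ = ((d : ℝ) + 1) * (Sa + t ^ 2 + Sb) := by ring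

lemma key_ineq (d : ℕ) (hd : 2 ≤ d) (y : Fin d × (Fin d × Fin d) → ℂ) :
    ∑ k, (‖∑ i, y (i, (i, k))‖ ^ 2 + ‖∑ i, y (i, (k, i))‖ ^ 2)
      ≤ ((d : ℝ) + 1) * ∑ m, ‖y m‖ ^ 2 := by
  classical
  have hk : ∀ k : Fin d, ‖∑ i, y (i, (i, k))‖ ^ 2 + ‖∑ i, y (i, (k, i))‖ ^ 2 ≤
      ((d : ℝ) + 1) * (∑ i, ‖y (i, (i, k))‖ ^ 2 + ∑ i ∈ Finset.univ.erase k, ‖y (i, (k, i))‖ ^ 2) :=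
    fun k => perk d hd k (fun i => y (i, (i, k))) (fun i => y (i, (k, i))) rfl
  have step1 : ∑ k, (‖∑ i, y (i, (i, k))‖ ^ 2 + ‖∑ i, y (i, (k, i))‖ ^ 2) ≤
      ((d : ℝ) + 1) * ∑ k, (∑ i, ‖y (i, (i, k))‖ ^ 2
        + ∑ i ∈ Finset.univ.erase k, ‖y (i, (k, i))‖ ^ 2) := by
    rw [Finset.mul_sum]
    exact Finset.sum_le_sum fun k _ => hk k
  refine le_trans step1 ?_
  have hd1 : 0 ≤ (d : ℝ) + 1 := by positivity
  refine mul_le_mul_of_nonneg_left ?_ hd1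
  -- disjoint support aggregation
  have herase : ∀ k : Fin d, ∑ i ∈ Finset.univ.erase k, ‖y (i, (k, i))‖ ^ 2
      = ∑ i, ‖y (i, (k, i))‖ ^ 2 - ‖y (k, (k, k))‖ ^ 2 := by
    intro k
    rw [Finset.sum_erase_eq_sub (Finset.mem_univ k)]
  simp only [herase]
  rw [Finset.sum_add_distrib, Finset.sum_sub_distrib]
  have e1 : ∑ k : Fin d, ∑ i : Fin d, ‖y (i, (i, k))‖ ^ 2
      = ∑ m : Fin d × (Fin d × Fin d), (if m.2.1 = m.1 then ‖y m‖ ^ 2 else 0) := by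
    rw [Fintype.sum_prod_type]
    rw [Finset.sum_comm]
    refine Finset.sum_congr rfl fun i _ => ?_
    rw [Fintype.sum_prod_type]
    simp [Finset.sum_ite_eq']
    rw [Finset.sum_comm]; simp [Finset.sum_ite_eq']
  have e2 : ∑ k : Fin d, ∑ i : Fin d, ‖y (i, (k, i))‖ ^ 2
      = ∑ m : Fin d × (Fin d × Fin d), (if m.2.2 = m.1 then ‖y m‖ ^ 2 else 0) := by
    rw [Finset.sum_comm]
    rw [Fintype.sum_prod_type]
    refine Finset.sum_congr rfl fun i _ => ?_
    rw [Fintype.sum_prod_type]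
    refine Finset.sum_congr rfl fun k _ => ?_
    simp [Finset.sum_ite_eq']
  have e3 : ∑ k : Fin d, ‖y (k, (k, k))‖ ^ 2
      = ∑ m : Fin d × (Fin d × Fin d), (if m.2.1 = m.1 ∧ m.2.2 = m.1 then ‖y m‖ ^ 2 else 0) := by
    rw [Fintype.sum_prod_type]
    refine Finset.sum_congr rfl fun i _ => ?_
    rw [Fintype.sum_prod_type]
    simp [Finset.sum_ite_eq', ite_and]
    rw [Finset.sum_comm]; simp [Finset.sum_ite_eq']
  rw [e1, e2, e3, ← Finset.sum_sub_distrib, ← Finset.sum_add_distrib]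
  refine Finset.sum_le_sum fun m _ => ?_
  split_ifs <;> simp_all <;> positivity

lemma psd_one {n : Type*} [Fintype n] [DecidableEq n] : (1 : Matrix n n ℂ).PosSemidef :=
  Matrix.PosSemidef.one

lemma psd_real_smul {n : Type*} [Fintype n] {M : Matrix n n ℂ} (hM : M.PosSemidef)
    {c : ℝ} (hc : 0 ≤ c) : ((c : ℂ) • M).PosSemidef := by
  refine ⟨?_, fun x => ?_⟩
  · unfold Matrix.IsHermitian
    rw [Matrix.conjTranspose_smul, hM.1]
    simp
  · exact (hM.smul (a := (c : ℂ)) (by exact_mod_cast hc)).2 x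

lemma Fmap_channel (d : ℕ) (c₁ c₂ : ℝ) (h1 : 0 ≤ c₁) (h2 : 0 ≤ c₂)
    (hsum : c₁ * (2 * (d : ℝ) + 2) + c₂ * (d : ℝ) ^ 2 = 1) : IsChannel (Fmap d c₁ c₂) := by
  constructor
  · unfold IsCP
    rw [choi_Fmap]
    exact (psd_real_smul (Matrix.posSemidef_conjTranspose_mul_self _) h1).add
      (psd_real_smul Matrix.PosSemidef.one h2)
  · intro ρ
    have hc : ((c₁ : ℂ) * (2 * (d : ℂ) + 2) + (c₂ : ℂ) * (d : ℂ) ^ 2) = 1 := by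
      exact_mod_cast hsum
    rw [tp_Fmap, hc, one_mul]

lemma E_apply (d : ℕ) (l : ℝ) (ρ : Matrix (Fin d) (Fin d) ℂ) (a c : Fin d) :
    (l • depol d + (1 - l) • (LinearMap.id :
        Matrix (Fin d) (Fin d) ℂ →ₗ[ℂ] Matrix (Fin d) (Fin d) ℂ)) ρ a c
      = (l : ℂ) * (ρ.trace / d) * (if a = c then 1 else 0) + (1 - (l : ℂ)) * ρ a c := by
  simp only [LinearMap.add_apply, LinearMap.smul_apply, LinearMap.id_apply, Matrix.add_apply,
    Matrix.smul_apply, depol, LinearMap.coe_mk, AddHom.coe_mk, Matrix.one_apply,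
    smul_eq_mul, Complex.real_smul]
  push_cast
  ring

lemma std_trace (d : ℕ) (p q : Fin d) :
    (Matrix.single p q (1 : ℂ)).trace = if p = q then 1 else 0 := by
  simp only [Matrix.trace, Matrix.diag, Matrix.single, Matrix.of_apply, ite_and,
    Finset.sum_ite_eq, Finset.mem_univ, if_true]
  split_ifs <;> simp_all

lemma sum_swap4 {M : Type*} [AddCommMonoid M] {a b c e : Type*} [Fintype a] [Fintype b]
    [Fintype c] [Fintype e] (f : a → b → c → e → M) :
    ∑ p, ∑ q, ∑ k, ∑ r, f p q k r = ∑ k, ∑ r, ∑ p, ∑ q, f p q k r :=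
  calc ∑ p, ∑ q, ∑ k, ∑ r, f p q k r
      = ∑ p, ∑ k, ∑ q, ∑ r, f p q k r :=
        Finset.sum_congr rfl fun p _ => Finset.sum_comm
    _ = ∑ k, ∑ p, ∑ q, ∑ r, f p q k r := Finset.sum_comm
    _ = ∑ k, ∑ p, ∑ r, ∑ q, f p q k r :=
        Finset.sum_congr rfl fun k _ => Finset.sum_congr rfl fun p _ => Finset.sum_comm
    _ = ∑ k, ∑ r, ∑ p, ∑ q, f p q k r :=
        Finset.sum_congr rfl fun k _ => Finset.sum_comm
theorem stmt16 (d : ℕ) (hd : 2 ≤ d) (l : ℝ) (hl : l ∈ Set.Icc (0 : ℝ) 1) :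
    SelfCompatible (l • depol d + (1 - l) • (LinearMap.id :
        Matrix (Fin d) (Fin d) ℂ →ₗ[ℂ] Matrix (Fin d) (Fin d) ℂ)) ↔
      (d : ℝ) / (2 * ((d : ℝ) + 1)) ≤ l := by
  have hd2 : (2 : ℝ) ≤ (d : ℝ) := by exact_mod_cast hd
  have hdpos : (0 : ℝ) < d := by linarith
  have hdC : (d : ℂ) ≠ 0 := by
    simp only [ne_eq, Nat.cast_eq_zero]; omega
  constructor
  · -- necessity
    rintro ⟨F, ⟨hCP, hTP⟩, h2, h1⟩
    obtain ⟨_, B, hB⟩ : ∃ (k : ℕ) (B : Matrix (Fin k) (Fin d × (Fin d × Fin d)) ℂ),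
        choi F = Bᴴ * B := by
      obtain ⟨k, v, hv⟩ := Matrix.posSemidef_iff_eq_sum_vecMulVec.mp hCP
      refine ⟨k, Matrix.of fun i x => star (v i x), ?_⟩
      ext x y
      rw [hv, Matrix.mul_apply, Matrix.sum_apply]
      simp [Matrix.vecMulVec_apply, Matrix.conjTranspose_apply]
    have hentry : ∀ m m' : Fin d × (Fin d × Fin d),
        choi F m m' = ∑ r, star (B r m) * B r m' := by
      intro m m'
      rw [hB, Matrix.mul_apply]
      simp [Matrix.conjTranspose_apply]
    have hsq : ∀ z : ℂ, star z * z = ((‖z‖ : ℂ)) ^ 2 := fun z => by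
      rw [RCLike.star_def]; exact RCLike.conj_mul z
    have c1 : ∑ m : Fin d × (Fin d × Fin d), choi F m m = (d : ℂ) := by
      rw [Fintype.sum_prod_type]
      have hp : ∀ p : Fin d, ∑ x : Fin d × Fin d, choi F (p, x) (p, x) = 1 := by
        intro p
        have : ∑ x : Fin d × Fin d, choi F (p, x) (p, x)
            = (F (Matrix.single p p 1)).trace := rfl
        rw [this, hTP, std_trace, if_pos rfl]
      simp [hp]
    have c0 : ∑ m : Fin d × (Fin d × Fin d), choi F m m
        = ((∑ r, ∑ m, ‖B r m‖ ^ 2 : ℝ) : ℂ) := by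
      push_cast
      rw [Finset.sum_comm]
      refine Finset.sum_congr rfl fun m _ => ?_
      rw [hentry]
      exact Finset.sum_congr rfl fun r _ => hsq _
    have htrace : ∑ r, ∑ m : Fin d × (Fin d × Fin d), ‖B r m‖ ^ 2 = (d : ℝ) := by
      have := c0.symm.trans c1
      exact_mod_cast this
    -- value of the double sum of E entries
    have hEsum : ∑ p, ∑ q, (l • depol d + (1 - l) • (LinearMap.id :
          Matrix (Fin d) (Fin d) ℂ →ₗ[ℂ] Matrix (Fin d) (Fin d) ℂ))
          (Matrix.single p q 1) p q
        = ((l + (1 - l) * (d : ℝ) ^ 2 : ℝ) : ℂ) := by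
      have hterm : ∀ p q : Fin d, (l • depol d + (1 - l) • (LinearMap.id :
          Matrix (Fin d) (Fin d) ℂ →ₗ[ℂ] Matrix (Fin d) (Fin d) ℂ))
          (Matrix.single p q 1) p q
          = (l : ℂ) * ((if p = q then 1 else 0) / d) * (if p = q then 1 else 0)
            + (1 - (l : ℂ)) := by
        intro p q
        rw [E_apply, std_trace]
        simp [Matrix.single_apply_same]
      simp only [hterm]
      rw [Finset.sum_comm]
      push_cast
      simp only [Finset.sum_add_distrib, mul_ite, ite_mul, mul_zero, zero_mul, mul_one,
        Finset.sum_ite_eq, Finset.sum_ite_eq', eq_self_iff_true, Finset.mem_univ, if_true, Finset.sum_const, Finset.card_univ,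
        Fintype.card_fin, nsmul_eq_mul]
      field_simp
    -- marginal identities
    have hm2 : ∀ p q : Fin d, ∑ k, choi F (p, (p, k)) (q, (q, k))
        = (l • depol d + (1 - l) • (LinearMap.id :
          Matrix (Fin d) (Fin d) ℂ →ₗ[ℂ] Matrix (Fin d) (Fin d) ℂ))
          (Matrix.single p q 1) p q := by
      intro p q
      rw [← h2]
      rfl
    have hm1 : ∀ p q : Fin d, ∑ k, choi F (p, (k, p)) (q, (k, q))
        = (l • depol d + (1 - l) • (LinearMap.id :
          Matrix (Fin d) (Fin d) ℂ →ₗ[ℂ] Matrix (Fin d) (Fin d) ℂ))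
          (Matrix.single p q 1) p q := by
      intro p q
      rw [← h1]
      rfl
    -- B-side expressions
    have hside1 : ∑ p, ∑ q, ∑ k, choi F (p, (p, k)) (q, (q, k))
        = ((∑ k, ∑ r, ‖∑ i, B r (i, (i, k))‖ ^ 2 : ℝ) : ℂ) := by
      push_cast
      simp only [hentry]
      rw [sum_swap4 (fun p q k r => star (B r (p, (p, k))) * B r (q, (q, k)))]
      refine Finset.sum_congr rfl fun k _ => Finset.sum_congr rfl fun r _ => ?_
      rw [← hsq, star_sum, Finset.sum_mul_sum]
    have hside2 : ∑ p, ∑ q, ∑ k, choi F (p, (k, p)) (q, (k, q))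
        = ((∑ k, ∑ r, ‖∑ i, B r (i, (k, i))‖ ^ 2 : ℝ) : ℂ) := by
      push_cast
      simp only [hentry]
      rw [sum_swap4 (fun p q k r => star (B r (p, (k, p))) * B r (q, (k, q)))]
      refine Finset.sum_congr rfl fun k _ => Finset.sum_congr rfl fun r _ => ?_
      rw [← hsq, star_sum, Finset.sum_mul_sum]
    have hX1 : ∑ k, ∑ r, ‖∑ i, B r (i, (i, k))‖ ^ 2 = l + (1 - l) * (d : ℝ) ^ 2 := by
      have e : ∑ p, ∑ q, ∑ k, choi F (p, (p, k)) (q, (q, k))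
          = ((l + (1 - l) * (d : ℝ) ^ 2 : ℝ) : ℂ) := by
        rw [← hEsum]
        exact Finset.sum_congr rfl fun p _ => Finset.sum_congr rfl fun q _ => hm2 p q
      exact_mod_cast hside1.symm.trans e
    have hX2 : ∑ k, ∑ r, ‖∑ i, B r (i, (k, i))‖ ^ 2 = l + (1 - l) * (d : ℝ) ^ 2 := by
      have e : ∑ p, ∑ q, ∑ k, choi F (p, (k, p)) (q, (k, q))
          = ((l + (1 - l) * (d : ℝ) ^ 2 : ℝ) : ℂ) := by
        rw [← hEsum]
        exact Finset.sum_congr rfl fun p _ => Finset.sum_congr rfl fun q _ => hm1 p q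
      exact_mod_cast hside2.symm.trans e
    -- the inequality
    have hbig : ∑ r, ∑ k, (‖∑ i, B r (i, (i, k))‖ ^ 2 + ‖∑ i, B r (i, (k, i))‖ ^ 2)
        ≤ ((d : ℝ) + 1) * ∑ r, ∑ m : Fin d × (Fin d × Fin d), ‖B r m‖ ^ 2 := by
      rw [Finset.mul_sum]
      exact Finset.sum_le_sum fun r _ => key_ineq d hd (fun m => B r m)
    rw [htrace] at hbig
    simp only [Finset.sum_add_distrib] at hbig
    have es1 : ∑ r, ∑ k, ‖∑ i, B r (i, (i, k))‖ ^ 2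
        = ∑ k, ∑ r, ‖∑ i, B r (i, (i, k))‖ ^ 2 := Finset.sum_comm
    have es2 : ∑ r, ∑ k, ‖∑ i, B r (i, (k, i))‖ ^ 2
        = ∑ k, ∑ r, ‖∑ i, B r (i, (k, i))‖ ^ 2 := Finset.sum_comm
    have hq : 2 * l + 2 * (1 - l) * (d : ℝ) ^ 2 ≤ ((d : ℝ) + 1) * d := by
      rw [es1, es2, hX1, hX2] at hbig
      linarith
    rw [div_le_iff₀ (by linarith : (0 : ℝ) < 2 * ((d : ℝ) + 1))]
    have h5 : (d : ℝ) * ((d : ℝ) - 1) ≤ 2 * l * (((d : ℝ) - 1) * ((d : ℝ) + 1)) := by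
      nlinarith [hq]
    have h6 : (0 : ℝ) < (d : ℝ) - 1 := by linarith
    nlinarith [h5, h6]

  · -- sufficiency
    intro h
    set c₁ : ℝ := (1 - l) / ((d : ℝ) + 2) with hc₁def
    set c₂ : ℝ := (2 * ((d : ℝ) + 1) * l - d) / ((d : ℝ) ^ 2 * ((d : ℝ) + 2)) with hc₂def
    have hc₁ : 0 ≤ c₁ := by
      apply div_nonneg <;> [linarith [hl.2]; linarith]
    have hc₂ : 0 ≤ c₂ := by
      apply div_nonneg
      · rw [div_le_iff₀ (by linarith : (0:ℝ) < 2 * ((d:ℝ)+1))] at h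
        linarith
      · positivity
    have hsum : c₁ * (2 * (d : ℝ) + 2) + c₂ * (d : ℝ) ^ 2 = 1 := by
      rw [hc₁def, hc₂def]
      field_simp
      ring
    have hr1 : ((c₁ : ℂ) * ((d : ℂ) + 2)) = 1 - (l : ℂ) := by
      have : c₁ * ((d : ℝ) + 2) = 1 - l := by
        rw [hc₁def]; field_simp
      exact_mod_cast this
    have hr2 : ((c₁ : ℂ) + (c₂ : ℂ) * (d : ℂ)) = (l : ℂ) / (d : ℂ) := by
      have : c₁ + c₂ * (d : ℝ) = l / d := by
        rw [hc₁def, hc₂def]; field_simp; ring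
      exact_mod_cast this
    refine ⟨Fmap d c₁ c₂, Fmap_channel d c₁ c₂ hc₁ hc₂ hsum, fun ρ => ?_, fun ρ => ?_⟩
    · funext a c
      rw [ptrace2_Fmap]
      simp only [Matrix.of_apply]
      rw [E_apply, hr1, hr2]
      field_simp
      ring
    · funext b e
      rw [ptrace1_Fmap]
      simp only [Matrix.of_apply]
      rw [E_apply, hr1, hr2]
      field_simp
      ring
end
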